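/- For any nonnegative real numbers a_1, ..., a_n with each a_i ≥ 1, the sum over i of a_i / (a_1 + ... + a_i) is at most 1 + log(a_1 + ... + a_n). -/

import Mathlib

lemma aux_log_step (S b : ℝ) (hS : 0 < S) (hb : 0 < b) :
    b / (S + b) ≤ Real.log (S + b) - Real.log S := by
  have hSb : 0 < S + b := by linarith
  have h := Real.log_le_sub_one_of_pos (x := S / (S + b)) (by positivity)
  rw [Real.log_div (ne_of_gt hS) (ne_of_gt hSb)] at h
  have : S / (S + b) - 1 = -(b / (S + b)) := by field_simp; ring
  linarith [this ▸ h]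

lemma aux_main (a : ℕ → ℝ) : ∀ n : ℕ, (∀ i < n + 1, 1 ≤ a i) →
    ∑ i ∈ Finset.range (n + 1), a i / (∑ j ∈ Finset.range (i + 1), a j) ≤
      1 + Real.log (∑ i ∈ Finset.range (n + 1), a i) := by
  intro n
  induction n with
  | zero =>
    intro ha
    have h0 : 1 ≤ a 0 := ha 0 (by norm_num)
    simp only [Nat.zero_add, Finset.sum_range_one]
    rw [div_self (by linarith)]
    have : 0 ≤ Real.log (a 0) := Real.log_nonneg h0
    linarith
  | succ n ih =>
    intro ha
    have ha' : ∀ i < n + 1, 1 ≤ a i := fun i hi => ha i (by omega)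
    have hIH := ih ha'
    have hS : (n + 1 : ℝ) ≤ ∑ i ∈ Finset.range (n + 1), a i := by
      calc (n + 1 : ℝ) = ∑ _i ∈ Finset.range (n + 1), (1 : ℝ) := by simp
        _ ≤ _ := Finset.sum_le_sum fun i hi => ha' i (Finset.mem_range.mp hi)
    have hSpos : 0 < ∑ i ∈ Finset.range (n + 1), a i := by nlinarith [Nat.cast_nonneg (α := ℝ) n]
    have hb : 0 < a (n + 1) := lt_of_lt_of_le one_pos (ha (n + 1) (by omega))
    rw [Finset.sum_range_succ (f := fun i => a i / (∑ j ∈ Finset.range (i + 1), a j)),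
      Finset.sum_range_succ (f := a)]
    have key := aux_log_step (∑ i ∈ Finset.range (n + 1), a i) (a (n + 1)) hSpos hb
    linarith

/-- For nonnegative reals `a 0, ..., a (n-1)` each at least 1, the sum of
`a i / (a 0 + ... + a i)` is at most `1 + log (a 0 + ... + a (n-1))`. -/
theorem stmt_0 (n : ℕ) (a : ℕ → ℝ) (ha : ∀ i < n, 1 ≤ a i) :
    ∑ i ∈ Finset.range n, a i / (∑ j ∈ Finset.range (i + 1), a j) ≤
      1 + Real.log (∑ i ∈ Finset.range n, a i) := by
  cases n with
  | zero => simp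
  | succ n => exact aux_main a n ha
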